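/- Let F be a field. If GL(n+1, F) is acceptable and char F ≠ 2, then GL(n, F) is acceptable. -/

import Mathlib

/-- A group `G` is *acceptable* if for every finite group `H`, any two element-conjugate
homomorphisms `H → G` are globally conjugate. -/
def IsAcceptable (G : Type*) [Group G] : Prop :=
  ∀ (H : Type) (_ : Group H) (_ : Finite H) (φ₁ φ₂ : H →* G),
    (∀ h : H, ∃ g : G, g * φ₁ h * g⁻¹ = φ₂ h) →
    ∃ g : G, ∀ h : H, g * φ₁ h * g⁻¹ = φ₂ h

open Matrix

/-- The reindexing algebra isomorphism. -/
noncomputable def reSum (F : Type*) [Field F] (n : ℕ) :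
    Matrix (Fin n ⊕ Fin 1) (Fin n ⊕ Fin 1) F ≃ₐ[F] Matrix (Fin (n + 1)) (Fin (n + 1)) F :=
  Matrix.reindexAlgEquiv F F (finSumFinEquiv (m := n) (n := 1))

/-- Block embedding on matrices as a monoid hom. -/
noncomputable def blkHom (F : Type*) [Field F] (n : ℕ) :
    Matrix (Fin n) (Fin n) F →* Matrix (Fin (n + 1)) (Fin (n + 1)) F where
  toFun A := reSum F n (fromBlocks A 0 0 1)
  map_one' := by
    show reSum F n (fromBlocks 1 0 0 1) = 1
    rw [fromBlocks_one, _root_.map_one]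
  map_mul' A B := by
    show reSum F n _ = reSum F n _ * reSum F n _
    rw [← _root_.map_mul]
    congr 1
    rw [fromBlocks_multiply]
    simp

/-- The embedding GL(n) → GL(n+1). -/
noncomputable def iota (F : Type*) [Field F] (n : ℕ) :
    GL (Fin n) F →* GL (Fin (n + 1)) F :=
  Units.map (blkHom F n)

/-- diag(1,…,1,-1) as a unit. -/
noncomputable def Dunit (F : Type*) [Field F] (n : ℕ) : GL (Fin (n + 1)) F where
  val := reSum F n (fromBlocks 1 0 0 (-1))
  inv := reSum F n (fromBlocks 1 0 0 (-1))
  val_inv := by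
    rw [← _root_.map_mul, fromBlocks_multiply]
    simp [← fromBlocks_one]
  inv_val := by
    rw [← _root_.map_mul, fromBlocks_multiply]
    simp [← fromBlocks_one]

lemma iota_commute_D {F : Type*} [Field F] {n : ℕ} (A : GL (Fin n) F) :
    Commute (iota F n A) (Dunit F n) := by
  apply Units.ext
  show blkHom F n A.val * (Dunit F n).val = (Dunit F n).val * blkHom F n A.val
  show reSum F n (fromBlocks A.val 0 0 1) * reSum F n (fromBlocks 1 0 0 (-1))
      = reSum F n (fromBlocks 1 0 0 (-1)) * reSum F n (fromBlocks A.val 0 0 1)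
  rw [← _root_.map_mul, ← _root_.map_mul, fromBlocks_multiply, fromBlocks_multiply]
  simp

set_option maxHeartbeats 1600000 in
theorem GL_acceptable_descends (F : Type*) [Field F] (hchar : (2 : F) ≠ 0) (n : ℕ)
    (h : IsAcceptable (GL (Fin (n + 1)) F)) : IsAcceptable (GL (Fin n) F) := by
  intro H _ _ φ₁ φ₂ hpc
  set D := Dunit F n with hD
  have hD2 : D ^ 2 = 1 := by
    rw [sq]
    exact Units.ext (Dunit F n).val_inv
  -- build ψᵢ : H × Multiplicative (ZMod 2) →* GL (n+1)
  have mkpsi : ∀ (φ : H →* GL (Fin n) F),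
      ∃ ψ : H × Multiplicative (ZMod 2) →* GL (Fin (n + 1)) F,
      ∀ p, ψ p = iota F n (φ p.1) * D ^ (p.2.toAdd.val) := by
    intro φ
    refine ⟨⟨⟨fun p => iota F n (φ p.1) * D ^ (p.2.toAdd.val), ?_⟩, ?_⟩, fun p => rfl⟩
    · show iota F n (φ 1) * D ^ ((1 : Multiplicative (ZMod 2)).toAdd.val) = 1
      simp
    · rintro ⟨a, x⟩ ⟨b, y⟩
      show iota F n (φ (a * b)) * D ^ ((x * y).toAdd.val)
          = iota F n (φ a) * D ^ (x.toAdd.val) * (iota F n (φ b) * D ^ (y.toAdd.val))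
      have hcomm : Commute (iota F n (φ b)) (D ^ x.toAdd.val) :=
        (iota_commute_D (φ b)).pow_right _
      have hpow : D ^ ((x * y).toAdd.val) = D ^ x.toAdd.val * D ^ y.toAdd.val := by
        have hxy : (x * y).toAdd = x.toAdd + y.toAdd := rfl
        rw [hxy, ZMod.val_add, ← pow_eq_pow_mod _ hD2, pow_add]
      rw [_root_.map_mul, _root_.map_mul, hpow]
      exact hcomm.mul_mul_mul_comm _ _
  obtain ⟨ψ₁, hψ₁⟩ := mkpsi φ₁
  obtain ⟨ψ₂, hψ₂⟩ := mkpsi φ₂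
  have hpc' : ∀ p, ∃ g, g * ψ₁ p * g⁻¹ = ψ₂ p := by
    rintro ⟨a, x⟩
    obtain ⟨c, hc⟩ := hpc a
    refine ⟨iota F n c, ?_⟩
    rw [hψ₁, hψ₂]
    have hcomm : Commute ((iota F n c)⁻¹) (D ^ x.toAdd.val) :=
      ((iota_commute_D c).pow_right _).inv_left
    have hkey : iota F n c * iota F n (φ₁ a) * (iota F n c)⁻¹ = iota F n (φ₂ a) := by
      rw [← _root_.map_inv, ← _root_.map_mul, ← _root_.map_mul, hc]
    calc iota F n c * (iota F n (φ₁ a) * D ^ x.toAdd.val) * (iota F n c)⁻¹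
        = iota F n c * iota F n (φ₁ a) * (D ^ x.toAdd.val * (iota F n c)⁻¹) := by group
      _ = iota F n c * iota F n (φ₁ a) * ((iota F n c)⁻¹ * D ^ x.toAdd.val) := by
          rw [hcomm.eq]
      _ = iota F n (φ₂ a) * D ^ x.toAdd.val := by rw [← mul_assoc, hkey]
  obtain ⟨g, hg⟩ := h (H × Multiplicative (ZMod 2)) inferInstance inferInstance ψ₁ ψ₂ hpc'
  -- extract relations
  have hgD : g * D * g⁻¹ = D := by
    have h0 := hg (1, Multiplicative.ofAdd (1 : ZMod 2))
    rw [hψ₁, hψ₂] at h0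
    have hv : (1 : ZMod 2).val = 1 := rfl
    simpa [hv] using h0
  have hgφ : ∀ a : H, g * iota F n (φ₁ a) * g⁻¹ = iota F n (φ₂ a) := by
    intro a
    have := hg (a, 1)
    rw [hψ₁, hψ₂] at this
    simpa using this
  -- pass to block matrices
  set re := reSum F n with hre
  set M := re.symm g.val with hM
  set N := re.symm (g⁻¹).val with hN
  have hMN : M * N = 1 := by
    rw [hM, hN, ← _root_.map_mul, ← Units.val_mul, mul_inv_cancel, Units.val_one,
      _root_.map_one]
  have hNM : N * M = 1 := by
    rw [hM, hN, ← _root_.map_mul, ← Units.val_mul, inv_mul_cancel, Units.val_one,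
      _root_.map_one]
  have hgD' : Commute g D := by
    have h0 := hgD
    rw [mul_inv_eq_iff_eq_mul] at h0
    exact h0
  have comm_lemma : ∀ u : GL (Fin (n+1)) F, Commute u D →
      re.symm u.val * fromBlocks 1 0 0 (-1) = fromBlocks 1 0 0 (-1) * re.symm u.val := by
    intro u hu
    have h1 : u.val * (Dunit F n).val = (Dunit F n).val * u.val := congrArg Units.val hu.eq
    have h2 := congrArg re.symm h1
    rw [_root_.map_mul, _root_.map_mul] at h2
    have h3 : re.symm (Dunit F n).val = fromBlocks 1 0 0 (-1) :=
      re.symm_apply_apply (fromBlocks 1 0 0 (-1))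
    rw [h3] at h2
    exact h2
  have hMD := comm_lemma g hgD'
  have hND := comm_lemma g⁻¹ hgD'.inv_left
  -- commuting with D forces block diagonal
  have key : ∀ P : Matrix (Fin n ⊕ Fin 1) (Fin n ⊕ Fin 1) F,
      P * fromBlocks 1 0 0 (-1) = fromBlocks 1 0 0 (-1) * P →
      P = fromBlocks P.toBlocks₁₁ 0 0 P.toBlocks₂₂ := by
    intro P hP
    have hblocks : fromBlocks P.toBlocks₁₁ (-P.toBlocks₁₂) P.toBlocks₂₁ (-P.toBlocks₂₂)
        = fromBlocks P.toBlocks₁₁ P.toBlocks₁₂ (-P.toBlocks₂₁) (-P.toBlocks₂₂) := by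
      calc fromBlocks P.toBlocks₁₁ (-P.toBlocks₁₂) P.toBlocks₂₁ (-P.toBlocks₂₂)
          = P * fromBlocks 1 0 0 (-1) := by
            conv_rhs => rw [← fromBlocks_toBlocks P]
            rw [fromBlocks_multiply]
            simp
        _ = fromBlocks 1 0 0 (-1) * P := hP
        _ = fromBlocks P.toBlocks₁₁ P.toBlocks₁₂ (-P.toBlocks₂₁) (-P.toBlocks₂₂) := by
            conv_lhs => rw [← fromBlocks_toBlocks P]
            rw [fromBlocks_multiply]
            simp
    rw [fromBlocks_inj] at hblocks
    have h12 : P.toBlocks₁₂ = 0 := by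
      funext i j
      have h0 := congrFun (congrFun hblocks.2.1 i) j
      simp only [Matrix.neg_apply] at h0
      have h2 : (2 : F) * P.toBlocks₁₂ i j = 0 := by linear_combination -h0
      rcases mul_eq_zero.mp h2 with hc | hc
      · exact absurd hc hchar
      · exact hc
    have h21 : P.toBlocks₂₁ = 0 := by
      funext i j
      have h0 := congrFun (congrFun hblocks.2.2.1 i) j
      simp only [Matrix.neg_apply] at h0
      have h2 : (2 : F) * P.toBlocks₂₁ i j = 0 := by linear_combination h0
      rcases mul_eq_zero.mp h2 with hc | hc
      · exact absurd hc hchar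
      · exact hc
    conv_lhs => rw [← fromBlocks_toBlocks P]
    rw [h12, h21]
  have hMblk := key M hMD
  have hNblk := key N hND
  set a := M.toBlocks₁₁ with ha
  set a' := N.toBlocks₁₁ with ha'
  have haa' : a * a' = 1 := by
    have h0 := congrArg Matrix.toBlocks₁₁ hMN
    rw [hMblk, hNblk, fromBlocks_multiply] at h0
    simpa [← fromBlocks_one] using h0
  have ha'a : a' * a = 1 := by
    have h0 := congrArg Matrix.toBlocks₁₁ hNM
    rw [hMblk, hNblk, fromBlocks_multiply] at h0
    simpa [← fromBlocks_one] using h0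
  refine ⟨⟨a, a', haa', ha'a⟩, fun b => ?_⟩
  apply Units.ext
  show a * (φ₁ b).val * a' = (φ₂ b).val
  have h1 : g.val * (blkHom F n (φ₁ b).val) * (g⁻¹).val = blkHom F n (φ₂ b).val := by
    have := congrArg Units.val (hgφ b)
    simpa [iota, mul_assoc] using this
  have h2 : M * fromBlocks (φ₁ b).val 0 0 1 * N = fromBlocks (φ₂ b).val 0 0 1 := by
    have h3 := congrArg re.symm h1
    rw [_root_.map_mul, _root_.map_mul] at h3
    have h4 : ∀ A : Matrix (Fin n) (Fin n) F,
        re.symm (blkHom F n A) = fromBlocks A 0 0 1 := fun A => re.symm_apply_apply _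
    rw [h4, h4] at h3
    exact h3
  have h5 := congrArg Matrix.toBlocks₁₁ h2
  rw [hMblk, hNblk, fromBlocks_multiply, fromBlocks_multiply] at h5
  simpa using h5
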